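/- arXiv:2104.03959 — 2 statements merged into one kernel-verified Lean document; each statement's English description precedes it below -/
import Mathlib

section
/- Let γ ∈ ℝ and let g : 𝔻 \ {0} → ℂ be holomorphic with ∫_𝔻 |z|^γ |g(z)|² dm(z) < ∞. Write γ = 2k + ξ with k ∈ ℤ and ξ ∈ (-2, 0]. Then the function z ↦ z^k g(z) extends holomorphically to 𝔻, and there are constants C > 0 and ε > 0 such that |z|^γ |g(z)|² ≤ C |z|^{ε-2} for all z near 0. -/
open MeasureTheory Complex Metric Set

open Real

lemma circle_mvp_sq {f : ℂ → ℂ} {c : ℂ} {s : ℝ} (hs : 0 < s)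
    (hf : DifferentiableOn ℂ f (closedBall c s)) :
    2 * π * ‖f c‖ ^ 2 ≤ ∫ θ in (0:ℝ)..(2*π), ‖f (circleMap c s θ)‖ ^ 2 := by
  have hf2 : DifferentiableOn ℂ (fun z => f z * f z) (closedBall c s) := hf.mul hf
  have h := hf2.circleIntegral_sub_inv_smul (mem_ball_self hs)
  rw [circleIntegral] at h
  have hne : ∀ θ : ℝ, circleMap 0 s θ ≠ 0 := by
    intro θ
    simpa using circleMap_ne_center (c := (0:ℂ)) hs.ne' (θ := θ)
  have key : ∀ θ : ℝ, deriv (circleMap c s) θ • ((circleMap c s θ - c)⁻¹ • (f (circleMap c s θ) * f (circleMap c s θ)))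
      = Complex.I * (f (circleMap c s θ) * f (circleMap c s θ)) := by
    intro θ
    rw [deriv_circleMap, circleMap_sub_center, smul_eq_mul, smul_eq_mul,
      mul_comm (circleMap 0 s θ) Complex.I, mul_assoc, mul_inv_cancel_left₀ (hne θ)]
  simp only [key] at h
  rw [intervalIntegral.integral_const_mul] at h
  have h2 : ∫ θ in (0:ℝ)..(2*π), f (circleMap c s θ) * f (circleMap c s θ)
      = (2 * π : ℂ) * (f c * f c) := by
    have e : (2 * ↑π * Complex.I : ℂ) • (f c * f c) = Complex.I * ((2 * π : ℂ) * (f c * f c)) := by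
      rw [smul_eq_mul]; ring
    rw [e] at h
    exact mul_left_cancel₀ Complex.I_ne_zero h
  have h3 : (2 * π) * ‖f c‖ ^ 2 = ‖∫ θ in (0:ℝ)..(2*π), f (circleMap c s θ) * f (circleMap c s θ)‖ := by
    rw [h2, norm_mul, norm_mul]
    have e1 : ‖(2:ℂ)‖ = 2 := by norm_num
    have e2 : ‖(π:ℂ)‖ = π := by
      rw [Complex.norm_real, Real.norm_eq_abs, abs_of_pos Real.pi_pos]
    rw [e1, e2, norm_mul]; ring
  rw [h3]
  have hb := intervalIntegral.norm_integral_le_integral_norm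
    (f := fun θ => f (circleMap c s θ) * f (circleMap c s θ)) (a := (0:ℝ)) (b := 2*π)
    (μ := volume) (by positivity)
  have h4 : (∫ θ in (0:ℝ)..(2*π), ‖f (circleMap c s θ) * f (circleMap c s θ)‖)
      = ∫ θ in (0:ℝ)..(2*π), ‖f (circleMap c s θ)‖ ^ 2 := by
    apply intervalIntegral.integral_congr
    intro θ _
    simp [norm_mul, sq]
  rw [h4] at hb
  exact hb


lemma ball_mvp_sq {f : ℂ → ℂ} {c : ℂ} {r : ℝ} (hr : 0 < r)
    (hf : DifferentiableOn ℂ f (closedBall c r)) :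
    π * r ^ 2 * ‖f c‖ ^ 2 ≤ ∫ w in ball c r, ‖f w‖ ^ 2 := by
  set φ : ℝ × ℝ → ℝ := fun p => p.1 * ‖f (c + circleMap 0 p.1 p.2)‖ ^ 2 with hφ
  set S : Set (ℝ × ℝ) := Ioo 0 r ×ˢ Ioo (-π) π with hS
  -- continuity
  have hψ : Continuous (fun p : ℝ × ℝ => c + circleMap 0 p.1 p.2) := by
    simp only [circleMap, zero_add]
    fun_prop
  have hmaps : MapsTo (fun p : ℝ × ℝ => c + circleMap 0 p.1 p.2)
      (Icc 0 r ×ˢ Icc (-π) π) (closedBall c r) := by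
    rintro ⟨s, θ⟩ ⟨hs, -⟩
    simp only [mem_closedBall, dist_eq_norm, add_sub_cancel_left]
    rw [norm_circleMap_zero]
    rw [_root_.abs_of_nonneg hs.1]
    exact hs.2
  have hcont : ContinuousOn φ (Icc 0 r ×ˢ Icc (-π) π) := by
    apply ContinuousOn.mul continuous_fst.continuousOn
    exact ((hf.continuousOn.comp hψ.continuousOn hmaps).norm.pow 2)
  have hint : IntegrableOn φ S := by
    refine (hcont.integrableOn_compact (isCompact_Icc.prod isCompact_Icc)).mono_set ?_
    exact prod_mono Ioo_subset_Icc_self Ioo_subset_Icc_self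
  -- polar coordinates
  have hq : ∀ w : ℂ, (ball c r).indicator (fun w => ‖f w‖ ^ 2) (c + w)
      = (ball 0 r).indicator (fun w => ‖f (c + w)‖ ^ 2) w := by
    intro w
    have hmem : c + w ∈ ball c r ↔ w ∈ ball 0 r := by
      simp [mem_ball, dist_eq_norm]
    by_cases hw : w ∈ ball 0 r
    · rw [indicator_of_mem (hmem.2 hw), indicator_of_mem hw]
    · rw [indicator_of_notMem (fun h => hw (hmem.1 h)), indicator_of_notMem hw]
  have hpolar : ∫ w in ball c r, ‖f w‖ ^ 2 = ∫ p in S, φ p := by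
    calc ∫ w in ball c r, ‖f w‖ ^ 2
        = ∫ w, (ball c r).indicator (fun w => ‖f w‖ ^ 2) w := by
          rw [integral_indicator measurableSet_ball]
      _ = ∫ w, (ball c r).indicator (fun w => ‖f w‖ ^ 2) (c + w) := by
          rw [integral_add_left_eq_self]
      _ = ∫ w, (ball 0 r).indicator (fun w => ‖f (c + w)‖ ^ 2) w := by
          simp_rw [hq]
      _ = ∫ p in polarCoord.target,
            p.1 • (ball 0 r).indicator (fun w => ‖f (c + w)‖ ^ 2) (Complex.polarCoord.symm p) := by
          rw [Complex.integral_comp_polarCoord_symm]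
      _ = ∫ p in polarCoord.target, S.indicator φ p := by
          apply setIntegral_congr_fun polarCoord.open_target.measurableSet
          rintro ⟨s, θ⟩ hp
          dsimp only
          rw [polarCoord_target] at hp
          obtain ⟨hs, hθ⟩ := hp
          have habs : ‖Complex.polarCoord.symm (s, θ)‖ = s := by
            rw [Complex.norm_polarCoord_symm, abs_of_pos hs]
          have hcm : Complex.polarCoord.symm (s, θ) = circleMap 0 s θ := by
            rw [Complex.polarCoord_symm_apply, circleMap, Complex.exp_mul_I]
            push_cast
            ring
          by_cases hsr : s < r
          · rw [indicator_of_mem, indicator_of_mem]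
            · rw [smul_eq_mul, hcm]
            · exact ⟨⟨hs, hsr⟩, hθ⟩
            · rw [mem_ball, dist_zero_right, habs]
              exact hsr
          · rw [indicator_of_notMem, indicator_of_notMem]
            · simp
            · exact fun h => hsr h.1.2
            · rw [mem_ball, dist_zero_right, habs]
              exact fun h => hsr h
      _ = ∫ p in polarCoord.target ∩ S, φ p := by
          rw [setIntegral_indicator (measurableSet_Ioo.prod measurableSet_Ioo)]
      _ = ∫ p in S, φ p := by
          congr 1
          rw [inter_eq_self_of_subset_right]
          rw [polarCoord_target]
          exact prod_mono Ioo_subset_Ioi_self (subset_refl _)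
  -- Fubini
  have hprod : IntegrableOn φ S (volume.prod volume) := by
    rwa [← Measure.volume_eq_prod]
  have hfub : ∫ p in S, φ p = ∫ s in Ioo 0 r, ∫ θ in Ioo (-π) π, φ (s, θ) := by
    rw [hS, Measure.volume_eq_prod, setIntegral_prod _ hprod]
  -- inner bound
  have hinner : ∀ s ∈ Ioo (0:ℝ) r, 2 * π * ‖f c‖ ^ 2 * s ≤ ∫ θ in Ioo (-π) π, φ (s, θ) := by
    rintro s ⟨hs0, hsr⟩
    have hIoo : ∫ θ in Ioo (-π) π, φ (s, θ) = ∫ θ in (-π)..π, φ (s, θ) := by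
      rw [intervalIntegral.integral_of_le (by linarith [pi_pos]), integral_Ioc_eq_integral_Ioo]
    have hper : Function.Periodic (fun θ => φ (s, θ)) (2 * π) := by
      intro θ
      simp only [hφ]
      rw [periodic_circleMap 0 s θ]
    have hshift : ∫ θ in (-π)..π, φ (s, θ) = ∫ θ in (0:ℝ)..(2*π), φ (s, θ) := by
      have := hper.intervalIntegral_add_eq (-π) 0
      rw [zero_add] at this
      have he : -π + 2 * π = π := by ring
      rw [he] at this
      exact this
    have hcirc : 2 * π * ‖f c‖ ^ 2 ≤ ∫ θ in (0:ℝ)..(2*π), ‖f (circleMap c s θ)‖ ^ 2 :=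
      circle_mvp_sq hs0 (hf.mono (closedBall_subset_closedBall hsr.le))
    have hcm : ∀ θ : ℝ, c + circleMap 0 s θ = circleMap c s θ := by
      intro θ; simp [circleMap]
    have : ∫ θ in (0:ℝ)..(2*π), φ (s, θ) = s * ∫ θ in (0:ℝ)..(2*π), ‖f (circleMap c s θ)‖ ^ 2 := by
      rw [← intervalIntegral.integral_const_mul]
      apply intervalIntegral.integral_congr
      intro θ _
      simp only [hφ, hcm]
    rw [hIoo, hshift, this]
    calc 2 * π * ‖f c‖ ^ 2 * s = s * (2 * π * ‖f c‖ ^ 2) := by ring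
      _ ≤ s * ∫ θ in (0:ℝ)..(2*π), ‖f (circleMap c s θ)‖ ^ 2 := by
          exact mul_le_mul_of_nonneg_left hcirc hs0.le
  -- outer comparison
  have hout_int : IntegrableOn (fun s => ∫ θ in Ioo (-π) π, φ (s, θ)) (Ioo 0 r) := by
    have h2 : Integrable φ ((volume.restrict (Ioo 0 r)).prod (volume.restrict (Ioo (-π) π))) := by
      rw [Measure.prod_restrict]
      exact hprod
    exact h2.integral_prod_left
  have hlin_int : IntegrableOn (fun s => 2 * π * ‖f c‖ ^ 2 * s) (Ioo 0 r) := by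
    exact ((continuous_const.mul continuous_id).continuousOn.integrableOn_compact
      isCompact_Icc).mono_set Ioo_subset_Icc_self
  have hmono : ∫ s in Ioo 0 r, 2 * π * ‖f c‖ ^ 2 * s ≤ ∫ s in Ioo 0 r, ∫ θ in Ioo (-π) π, φ (s, θ) :=
    setIntegral_mono_on hlin_int hout_int measurableSet_Ioo hinner
  have hval : ∫ s in Ioo 0 r, 2 * π * ‖f c‖ ^ 2 * s = π * r ^ 2 * ‖f c‖ ^ 2 := by
    rw [MeasureTheory.integral_const_mul]
    have : ∫ s in Ioo (0:ℝ) r, s = r ^ 2 / 2 := by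
      rw [← integral_Ioc_eq_integral_Ioo, ← intervalIntegral.integral_of_le hr.le,
        integral_id]
      ring
    rw [this]
    ring
  rw [hpolar, hfub]
  rw [hval] at hmono
  exact hmono


lemma int_small {h : ℂ → ℝ} (hint : IntegrableOn h (ball (0:ℂ) 1 \ {0}))
    (hnn : ∀ w, 0 ≤ h w) :
    ∀ ε > 0, ∃ δ > 0, δ ≤ 1 ∧ ∀ t, 0 < t → t ≤ δ →
      ∫ w in ball (0:ℂ) t \ {0}, h w ≤ ε := by
  intro ε hε
  set s : ℕ → Set ℂ := fun n => ball (0:ℂ) (1/(n+1)) \ {0} with hs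
  have hsm : ∀ n, MeasurableSet (s n) :=
    fun n => measurableSet_ball.diff (measurableSet_singleton 0)
  have hanti : Antitone s := by
    intro m n hmn
    apply diff_subset_diff_left
    apply ball_subset_ball
    apply one_div_le_one_div_of_le (by positivity)
    have : (m:ℝ) ≤ n := Nat.cast_le.2 hmn
    linarith
  have h0 : s 0 = ball (0:ℂ) 1 \ {0} := by norm_num [hs]
  have hfi : ∃ n, IntegrableOn h (s n) := ⟨0, by rw [h0]; exact hint⟩
  have htd := tendsto_setIntegral_of_antitone hsm hanti hfi
  have hiInt : ⋂ n, s n = ∅ := by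
    have hb : ⋂ n : ℕ, ball (0:ℂ) (1/((n:ℝ)+1)) = {0} := by
      ext z
      simp only [mem_iInter, mem_ball, dist_zero_right, mem_singleton_iff]
      constructor
      · intro hz
        by_contra hz0
        have hzpos : 0 < ‖z‖ := norm_pos_iff.2 hz0
        obtain ⟨n, hn⟩ := exists_nat_one_div_lt hzpos
        exact absurd (hz n) (not_lt.2 hn.le)
      · rintro rfl
        intro n
        rw [norm_zero]
        positivity
    rw [eq_empty_iff_forall_notMem]
    intro z hz
    simp only [hs, mem_iInter, mem_diff, mem_singleton_iff] at hz
    have h2 : z ≠ 0 := (hz 0).2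
    have h3 : z ∈ ⋂ n : ℕ, ball (0:ℂ) (1/((n:ℝ)+1)) := mem_iInter.2 fun n => (hz n).1
    rw [hb] at h3
    exact h2 h3
  rw [hiInt] at htd
  simp only [MeasureTheory.setIntegral_empty] at htd
  obtain ⟨n, hn⟩ := (htd.eventually_lt_const hε).exists
  have hn0 : (0:ℝ) ≤ n := Nat.cast_nonneg n
  refine ⟨1/((n:ℝ)+1), by positivity, ?_, ?_⟩
  · rw [div_le_one (by positivity)]; linarith
  · intro t ht htle
    have hsub : ball (0:ℂ) t \ {0} ⊆ s n := diff_subset_diff_left (ball_subset_ball htle)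
    have hle : ∫ w in ball (0:ℂ) t \ {0}, h w ≤ ∫ w in s n, h w := by
      apply setIntegral_mono_set (hint.mono_set (by rw [← h0]; exact hanti (Nat.zero_le n)))
      · exact Filter.Eventually.of_forall hnn
      · exact HasSubset.Subset.eventuallyLE hsub
    exact hle.trans hn.le


lemma abs_bounds {z w : ℂ} (hw : dist w z ≤ ‖z‖ / 2) :
    ‖z‖ / 2 ≤ ‖w‖ ∧ ‖w‖ ≤ 3/2 * ‖z‖ := by
  rw [Complex.dist_eq] at hw
  have h3 : ‖z - w‖ = ‖w - z‖ := by
    rw [← norm_neg, neg_sub]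
  have h1 : ‖z‖ ≤ ‖w - z‖ + ‖w‖ := by
    rw [← h3]
    simpa using norm_add_le (z - w) w
  have h2 : ‖w‖ ≤ ‖w - z‖ + ‖z‖ := by
    simpa using norm_add_le (w - z) z
  constructor <;> linarith

lemma pointwise_bound (γ : ℝ) (g : ℂ → ℂ)
    (hg : DifferentiableOn ℂ g (ball (0 : ℂ) 1 \ {0}))
    (hL2 : IntegrableOn (fun z => (‖z‖) ^ γ * ‖g z‖ ^ 2) (ball (0 : ℂ) 1 \ {0}))
    (z : ℂ) (hz0 : z ≠ 0) (hz : ‖z‖ < 1/2) :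
    π * (‖z‖ / 2) ^ 2 * ‖g z‖ ^ 2 ≤
      (max ((2:ℝ) ^ γ) ((3/2:ℝ) ^ (-γ))) * (‖z‖) ^ (-γ) *
        ∫ w in ball (0:ℂ) (3/2 * ‖z‖) \ {0}, (‖w‖) ^ γ * ‖g w‖ ^ 2 := by
  set a := ‖z‖ with ha_def
  have ha : 0 < a := norm_pos_iff.mpr hz0
  set Cγ := max ((2:ℝ) ^ γ) ((3/2:ℝ) ^ (-γ)) with hCγ
  have hCpos : 0 < Cγ := lt_max_of_lt_left (Real.rpow_pos_of_pos two_pos γ)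
  have hsub : closedBall z (a/2) ⊆ ball (0:ℂ) 1 \ {0} := by
    intro w hw
    rw [mem_closedBall] at hw
    obtain ⟨hb1, hb2⟩ := abs_bounds hw
    constructor
    · rw [mem_ball, Complex.dist_eq, sub_zero]
      linarith
    · simp only [mem_singleton_iff]
      intro hw0
      rw [hw0, norm_zero] at hb1
      linarith
  have hball_sub : ball z (a/2) ⊆ ball (0:ℂ) (3/2 * a) \ {0} := by
    intro w hw
    rw [mem_ball] at hw
    obtain ⟨hb1, hb2⟩ := abs_bounds hw.le
    have hlt : ‖w‖ < 3/2 * a := by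
      rw [Complex.dist_eq] at hw
      have : ‖w‖ ≤ ‖w - z‖ + a := by
        simpa using norm_add_le (w - z) z
      linarith
    constructor
    · rw [mem_ball, Complex.dist_eq, sub_zero]; exact hlt
    · simp only [mem_singleton_iff]
      intro hw0
      rw [hw0, norm_zero] at hb1
      linarith
  have hsmall : ball (0:ℂ) (3/2 * a) \ {0} ⊆ ball (0:ℂ) 1 \ {0} := by
    apply diff_subset_diff_left
    apply ball_subset_ball
    linarith
  have hwInt : IntegrableOn (fun w => (‖w‖) ^ γ * ‖g w‖ ^ 2)
      (ball (0:ℂ) (3/2 * a) \ {0}) := hL2.mono_set hsmall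
  have hmvp := ball_mvp_sq (half_pos ha) (hg.mono hsub)
  have hgInt : IntegrableOn (fun w => ‖g w‖ ^ 2) (ball z (a/2)) := by
    have hc : ContinuousOn (fun w => ‖g w‖ ^ 2) (closedBall z (a/2)) :=
      ((hg.mono hsub).continuousOn.norm.pow 2)
    exact (hc.integrableOn_compact (isCompact_closedBall _ _)).mono_set ball_subset_closedBall
  have hpt : ∀ w ∈ ball z (a/2),
      ‖g w‖ ^ 2 ≤ Cγ * a ^ (-γ) * ((‖w‖) ^ γ * ‖g w‖ ^ 2) := by
    intro w hw
    rw [mem_ball] at hw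
    obtain ⟨hb1, hb2⟩ := abs_bounds hw.le
    set b := ‖w‖ with hb_def
    have hbpos : 0 < b := lt_of_lt_of_le (by linarith) hb1
    have key : b ^ (-γ) ≤ Cγ * a ^ (-γ) := by
      rcases le_or_gt 0 γ with hγ0 | hγ0
      · have hstep : b ^ (-γ) ≤ (a/2) ^ (-γ) :=
          Real.rpow_le_rpow_of_nonpos (by linarith) hb1 (by linarith)
        have heq : (a/2) ^ (-γ) = (2:ℝ) ^ γ * a ^ (-γ) := by
          rw [div_eq_mul_inv, Real.mul_rpow ha.le (by norm_num),
            Real.inv_rpow (by norm_num), ← Real.rpow_neg (by norm_num), neg_neg]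
          ring
        rw [heq] at hstep
        exact hstep.trans (mul_le_mul_of_nonneg_right (le_max_left _ _)
          (Real.rpow_nonneg ha.le _))
      · have hstep : b ^ (-γ) ≤ (3/2 * a) ^ (-γ) :=
          Real.rpow_le_rpow hbpos.le hb2 (by linarith)
        have heq : (3/2 * a) ^ (-γ) = (3/2:ℝ) ^ (-γ) * a ^ (-γ) :=
          Real.mul_rpow (by norm_num) ha.le
        rw [heq] at hstep
        exact hstep.trans (mul_le_mul_of_nonneg_right (le_max_right _ _)
          (Real.rpow_nonneg ha.le _))
    have hone : b ^ (-γ) * b ^ γ = 1 := by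
      rw [← Real.rpow_add hbpos]
      simp
    calc ‖g w‖ ^ 2 = b ^ (-γ) * b ^ γ * ‖g w‖ ^ 2 := by rw [hone, one_mul]
      _ = b ^ (-γ) * (b ^ γ * ‖g w‖ ^ 2) := by ring
      _ ≤ Cγ * a ^ (-γ) * (b ^ γ * ‖g w‖ ^ 2) := by
          apply mul_le_mul_of_nonneg_right key
          positivity
  have step1 : ∫ w in ball z (a/2), ‖g w‖ ^ 2 ≤
      ∫ w in ball z (a/2), Cγ * a ^ (-γ) * ((‖w‖) ^ γ * ‖g w‖ ^ 2) :=
    setIntegral_mono_on hgInt ((hwInt.mono_set hball_sub).const_mul _) measurableSet_ball hpt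
  have step2 : ∫ w in ball z (a/2), Cγ * a ^ (-γ) * ((‖w‖) ^ γ * ‖g w‖ ^ 2)
      = Cγ * a ^ (-γ) * ∫ w in ball z (a/2), (‖w‖) ^ γ * ‖g w‖ ^ 2 := by
    rw [MeasureTheory.integral_const_mul]
  have step3 : ∫ w in ball z (a/2), (‖w‖) ^ γ * ‖g w‖ ^ 2 ≤
      ∫ w in ball (0:ℂ) (3/2 * a) \ {0}, (‖w‖) ^ γ * ‖g w‖ ^ 2 := by
    apply setIntegral_mono_set hwInt
    · apply Filter.Eventually.of_forall
      intro w
      positivity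
    · exact HasSubset.Subset.eventuallyLE hball_sub
  calc π * (a/2) ^ 2 * ‖g z‖ ^ 2 ≤ ∫ w in ball z (a/2), ‖g w‖ ^ 2 := hmvp
    _ ≤ Cγ * a ^ (-γ) * ∫ w in ball z (a/2), (‖w‖) ^ γ * ‖g w‖ ^ 2 := by
        rw [← step2]; exact step1
    _ ≤ Cγ * a ^ (-γ) * ∫ w in ball (0:ℂ) (3/2 * a) \ {0}, (‖w‖) ^ γ * ‖g w‖ ^ 2 := by
        apply mul_le_mul_of_nonneg_left step3
        positivity


lemma zpow_sq_rpow {a : ℝ} (ha : 0 < a) (k : ℤ) : (a ^ k) ^ 2 = a ^ ((k:ℝ) * 2) := by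
  rw [← Real.rpow_intCast a k, Real.rpow_mul ha.le, Real.rpow_two]
  
/-- if `g` is holomorphic on the punctured unit disk with
`∫_𝔻 |z|^γ |g(z)|² dm(z) < ∞`, and `γ = 2k + ξ` with `k ∈ ℤ`, `ξ ∈ (-2, 0]`, then
`z ↦ z^k g(z)` extends holomorphically to `𝔻`, and `|z|^γ |g(z)|² ≤ C |z|^{ε-2}` near `0`. -/
theorem statement4 (γ : ℝ) (g : ℂ → ℂ)
    (hg : DifferentiableOn ℂ g (ball (0 : ℂ) 1 \ {0}))
    (hL2 : IntegrableOn (fun z => (‖z‖) ^ γ * ‖g z‖ ^ 2) (ball (0 : ℂ) 1 \ {0}))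
    (k : ℤ) (ξ : ℝ) (hγ : γ = 2 * k + ξ) (hξ : ξ ∈ Set.Ioc (-2 : ℝ) 0) :
    (∃ G : ℂ → ℂ, DifferentiableOn ℂ G (ball (0 : ℂ) 1) ∧
      ∀ z ∈ ball (0 : ℂ) 1 \ {0}, G z = z ^ k * g z) ∧
    ∃ C > (0 : ℝ), ∃ ε > (0 : ℝ), ∃ δ > (0 : ℝ), ∀ z : ℂ, z ≠ 0 → ‖z‖ < δ →
      (‖z‖) ^ γ * ‖g z‖ ^ 2 ≤ C * (‖z‖) ^ (ε - 2) := by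
  obtain ⟨hξ1, hξ2⟩ := hξ
  have hπ := Real.pi_pos
  set f : ℂ → ℂ := fun z => z ^ k * g z with hf_def
  have hd : DifferentiableOn ℂ f (ball (0:ℂ) 1 \ {0}) := by
    intro z hz
    have hz0 : z ≠ 0 := hz.2
    exact ((differentiableAt_zpow.mpr (Or.inl hz0)).differentiableWithinAt).mul (hg z hz)
  have hnn : ∀ w : ℂ, 0 ≤ (‖w‖) ^ γ * ‖g w‖ ^ 2 := fun w => by positivity
  set Cγ := max ((2:ℝ) ^ γ) ((3/2:ℝ) ^ (-γ)) with hCγ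
  have hCpos : 0 < Cγ := lt_max_of_lt_left (Real.rpow_pos_of_pos two_pos γ)
  set K := 4 * Cγ / π with hK
  have hKpos : 0 < K := by positivity
  -- the key limit
  have T : Filter.Tendsto (fun z => z * f z) (nhdsWithin 0 {(0:ℂ)}ᶜ) (nhds 0) := by
    rw [NormedAddCommGroup.tendsto_nhds_zero]
    intro ε hε
    obtain ⟨δ₀, hδ₀pos, hδ₀le, hδ₀⟩ := int_small hL2 hnn (ε^2/(2*K)) (by positivity)
    have hmem : ball (0:ℂ) (min (1/2) (2*δ₀/3)) ∈ nhdsWithin (0:ℂ) {0}ᶜ :=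
      mem_nhdsWithin_of_mem_nhds (ball_mem_nhds _ (by positivity))
    filter_upwards [hmem, self_mem_nhdsWithin] with z hz1 hz2
    have hz0 : z ≠ 0 := hz2
    set a := ‖z‖ with ha_def
    have ha : 0 < a := norm_pos_iff.mpr hz0
    rw [mem_ball, dist_zero_right, lt_min_iff] at hz1
    obtain ⟨hahalf, haδ⟩ := hz1
    have hD := pointwise_bound γ g hg hL2 z hz0 hahalf
    set Iq := ∫ w in ball (0:ℂ) (3/2 * a) \ {0}, (‖w‖) ^ γ * ‖g w‖ ^ 2 with hIq
    have hIq0 : 0 ≤ Iq := by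
      apply setIntegral_nonneg (measurableSet_ball.diff (measurableSet_singleton 0))
      intro w _
      positivity
    have hIqle : Iq ≤ ε^2/(2*K) := hδ₀ (3/2 * a) (by positivity) (by linarith)
    have hgb : ‖g z‖^2 ≤ Cγ * a^(-γ) * Iq / (π * (a/2)^2) := by
      rw [le_div_iff₀ (by positivity)]
      calc ‖g z‖^2 * (π*(a/2)^2) = π*(a/2)^2*‖g z‖^2 := by ring
        _ ≤ Cγ * a^(-γ) * Iq := hD
    have hnorm : ‖z * f z‖^2 = a ^ ((2:ℝ) + (k:ℝ)*2) * ‖g z‖^2 := by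
      have e0 : ‖z * f z‖ = a * (a ^ k * ‖g z‖) := by
        rw [hf_def]
        rw [norm_mul, norm_mul, norm_zpow]
      rw [e0, mul_pow, mul_pow, zpow_sq_rpow ha, Real.rpow_add ha, Real.rpow_two]
      ring
    have key : ‖z * f z‖^2 ≤ K * a^(-ξ) * Iq := by
      have step : ‖z * f z‖^2 ≤ a ^ ((2:ℝ) + (k:ℝ)*2) * (Cγ * a^(-γ) * Iq / (π * (a/2)^2)) := by
        rw [hnorm]
        exact mul_le_mul_of_nonneg_left hgb (Real.rpow_nonneg ha.le _)
      refine step.trans_eq ?_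
      have ha2ne : a ^ ((2:ℝ)) ≠ 0 := (Real.rpow_pos_of_pos ha _).ne'
      have e2 : a ^ ((2:ℝ) + (k:ℝ)*2) * a^(-γ) / a^((2:ℝ)) = a^(-ξ) := by
        rw [← Real.rpow_add ha, ← Real.rpow_sub ha]
        congr 1
        rw [hγ]
        push_cast
        ring
      have e1 : (a/2)^2 = a^((2:ℝ))/4 := by
        rw [Real.rpow_two]
        ring
      rw [e1, hK, ← e2]
      field_simp
    have hfinal : ‖z * f z‖^2 < ε^2 := by
      have h1 : a^(-ξ) ≤ 1 := Real.rpow_le_one ha.le (by linarith) (by linarith)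
      calc ‖z * f z‖^2 ≤ K * a^(-ξ) * Iq := key
        _ ≤ K * 1 * Iq := by
            apply mul_le_mul_of_nonneg_right _ hIq0
            exact mul_le_mul_of_nonneg_left h1 hKpos.le
        _ = K * Iq := by ring
        _ ≤ K * (ε^2/(2*K)) := mul_le_mul_of_nonneg_left hIqle hKpos.le
        _ = ε^2/2 := by field_simp
        _ < ε^2 := by
            have : 0 < ε^2 := by positivity
            linarith
    exact lt_of_pow_lt_pow_left₀ 2 hε.le hfinal
  have ho : (fun z => f z - f 0) =o[nhdsWithin 0 {(0:ℂ)}ᶜ] fun z => (z - 0)⁻¹ := by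
    rw [Asymptotics.isLittleO_iff]
    intro ε hε
    have T2 : Filter.Tendsto (fun z : ℂ => z * f 0) (nhdsWithin 0 {(0:ℂ)}ᶜ) (nhds 0) := by
      have : Filter.Tendsto (fun z : ℂ => z * f 0) (nhds 0) (nhds 0) := by
        have := (continuous_mul_right (f 0)).tendsto (0:ℂ)
        simpa using this
      exact this.mono_left nhdsWithin_le_nhds
    have T' : Filter.Tendsto (fun z => z * (f z - f 0)) (nhdsWithin 0 {(0:ℂ)}ᶜ) (nhds 0) := by
      have := T.sub T2
      simp only [mul_sub, sub_zero] at this ⊢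
      simpa using this
    rw [NormedAddCommGroup.tendsto_nhds_zero] at T'
    filter_upwards [T' ε hε, self_mem_nhdsWithin] with z h1 h2
    have hz0 : z ≠ 0 := h2
    have hzn : ‖z‖ ≠ 0 := norm_ne_zero_iff.mpr hz0
    rw [sub_zero, norm_inv]
    calc ‖f z - f 0‖ = ‖z‖⁻¹ * ‖z * (f z - f 0)‖ := by
          rw [norm_mul, ← mul_assoc, inv_mul_cancel₀ hzn, one_mul]
      _ ≤ ‖z‖⁻¹ * ε := mul_le_mul_of_nonneg_left h1.le (inv_nonneg.2 (norm_nonneg z))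
      _ = ε * ‖z‖⁻¹ := mul_comm _ _
  set G := Function.update f 0 (Filter.limUnder (nhdsWithin 0 {(0:ℂ)}ᶜ) f) with hG_def
  have hGdiff : DifferentiableOn ℂ G (ball (0:ℂ) 1) :=
    Complex.differentiableOn_update_limUnder_of_isLittleO (ball_mem_nhds (0:ℂ) one_pos) hd ho
  have hGeq : ∀ z ∈ ball (0:ℂ) 1 \ {0}, G z = z ^ k * g z := by
    intro z hz
    have hz0 : z ≠ 0 := hz.2
    rw [hG_def, Function.update_of_ne hz0]
  refine ⟨⟨G, hGdiff, hGeq⟩, ?_⟩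
  have hc0 : ContinuousAt G 0 :=
    (hGdiff.differentiableAt (isOpen_ball.mem_nhds (mem_ball_self one_pos))).continuousAt
  obtain ⟨δ', hδ'pos, hδ'⟩ := Metric.continuousAt_iff.1 hc0 1 one_pos
  set M := ‖G 0‖ + 1 with hM
  have hMpos : 0 < M := by positivity
  refine ⟨M^2, by positivity, ξ + 2, by linarith, min δ' (1/2), lt_min hδ'pos (by norm_num), ?_⟩
  intro z hz0 hzlt
  set a := ‖z‖ with ha_def
  have ha : 0 < a := norm_pos_iff.mpr hz0
  rw [lt_min_iff] at hzlt
  obtain ⟨h1, h2⟩ := hzlt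
  have hzD : z ∈ ball (0:ℂ) 1 \ {0} :=
    ⟨by rw [mem_ball, dist_zero_right]; linarith, hz0⟩
  have hGb : ‖G z‖ ≤ M := by
    have hd1 : dist (G z) (G 0) < 1 := hδ' (by rw [dist_zero_right]; exact h1)
    have hd2 : ‖G z‖ - ‖G 0‖ ≤ ‖G z - G 0‖ := norm_sub_norm_le _ _
    rw [dist_eq_norm] at hd1
    rw [hM]; linarith
  have hgz : ‖g z‖ = a ^ (-k) * ‖G z‖ := by
    have e : (z:ℂ) ^ (-k) * G z = g z := by
      rw [hGeq z hzD, ← mul_assoc, ← zpow_add₀ hz0]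
      simp
    rw [← e, norm_mul, norm_zpow]
  calc (‖z‖) ^ γ * ‖g z‖ ^ 2
      = a ^ γ * ((a ^ (-k))^2 * ‖G z‖^2) := by rw [hgz, mul_pow]
    _ = a ^ ξ * ‖G z‖^2 := by
        rw [zpow_sq_rpow ha, ← mul_assoc, ← Real.rpow_add ha]
        congr 2
        rw [hγ]; push_cast; ring
    _ ≤ a ^ ξ * M^2 := by
        apply mul_le_mul_of_nonneg_left _ (Real.rpow_nonneg ha.le _)
        exact pow_le_pow_left₀ (norm_nonneg _) hGb 2
    _ = M^2 * a ^ (ξ + 2 - 2) := by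
        rw [show ξ + 2 - 2 = ξ by ring, mul_comm]
end

section
/- Let μ be an atomless locally finite positive measure on ℂ with ∫ |x|^{2(N-1)} dμ(x) < ∞, and let (p₁,...,p_N) be an orthonormal basis of ℂ_{N-1}[z] ⊆ L²(ℂ, μ). Set K(z,w) = Σ_{k=1}^N p_k(z) conj(p_k(w)). Then the Vandermonde density ∏_{i<j} |x_i - x_j|² is proportional to det(K(x_i,x_j))_{1≤i,j≤N} as functions on ℂ^N, and the measure dγ = ∏_{i<j}|x_i-x_j|² dμ^{⊗N} is finite. -/
open MeasureTheory Complex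

/-- Auxiliary: on a finite power of a sigma-finite measure space, a product of integrable
functions depending on each coordinate is integrable. -/
lemma aux_integrable_pi_prod {α : Type*} [MeasurableSpace α] (μ : Measure α) [SigmaFinite μ]
    {n : ℕ} (f : Fin n → α → ℝ) (hf : ∀ i, Integrable (f i) μ) :
    Integrable (fun x : Fin n → α => ∏ i, f i (x i)) (Measure.pi fun _ : Fin n => μ) := by
  induction n with
  | zero =>
      simp only [Finset.univ_eq_empty, Finset.prod_empty]
      rw [integrable_const_iff]
      right
      exact ⟨by simp [Measure.pi_empty_univ]⟩
  | succ n ih =>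
      have hmp := (MeasureTheory.measurePreserving_piFinSuccAbove
        (fun _ : Fin (n + 1) => μ) 0).symm
      rw [← hmp.integrable_comp_emb (MeasurableEquiv.measurableEmbedding _)]
      simp_rw [MeasurableEquiv.piFinSuccAbove_symm_apply, Fin.insertNthEquiv,
        Fin.prod_univ_succ, Fin.insertNth_zero]
      simp only [Fin.zero_succAbove, Function.comp_def, Fin.cons_zero, Fin.cons_succ,
        Equiv.coe_fn_mk]
      exact Integrable.mul_prod (hf 0) (ih _ (fun i => hf _))

/-- for an atomless locally finite measure `μ` with finite moment of order
`2(N-1)` and an orthonormal basis `(p_k)` of `ℂ_{N-1}[z] ⊆ L²(ℂ,μ)`, the Vandermonde density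
`∏_{i<j} |x_i - x_j|²` is proportional (with positive constant) to
`det(K(x_i,x_j))_{i,j ≤ N}` where `K(z,w) = Σ_k p_k(z) conj(p_k(w))`, and the measure
`∏_{i<j}|x_i-x_j|² dμ^{⊗N}` is finite. -/
theorem statement13 (μ : Measure ℂ) [NullSingletonClass μ] [IsLocallyFiniteMeasure μ]
    (N : ℕ) (hN : 0 < N)
    (hmom : Integrable (fun x : ℂ => ‖x‖ ^ (2 * (N - 1))) μ)
    (p : Fin N → Polynomial ℂ)
    (hdeg : ∀ k, (p k).degree < N)
    (horth : ∀ k m : Fin N,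
      (∫ x, (p k).eval x * (starRingEnd ℂ) ((p m).eval x) ∂μ) = if k = m then 1 else 0)
    (hspan : ∀ q : Polynomial ℂ, q.degree < N →
      ∃ c : Fin N → ℂ, q = ∑ k : Fin N, Polynomial.C (c k) * p k)
    (K : ℂ → ℂ → ℂ)
    (hK : ∀ z w : ℂ, K z w = ∑ k : Fin N, (p k).eval z * (starRingEnd ℂ) ((p k).eval w)) :
    (∃ c : ℝ, 0 < c ∧ ∀ x : Fin N → ℂ,
      Matrix.det (Matrix.of fun i j => K (x i) (x j))
        = (c : ℂ) * ∏ i : Fin N, ∏ j ∈ Finset.Ioi i,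
            ((‖x i - x j‖ : ℝ) : ℂ) ^ 2) ∧
    Integrable (fun x : Fin N → ℂ =>
        ∏ i : Fin N, ∏ j ∈ Finset.Ioi i, ‖x i - x j‖ ^ 2)
      (Measure.pi fun _ : Fin N => μ) := by
  classical
  -- the coefficient matrix of the family `p`
  set a : Matrix (Fin N) (Fin N) ℂ := Matrix.of fun k j => (p k).coeff j with ha
  have hnat : ∀ k, (p k).natDegree < N := by
    intro k
    by_cases h : p k = 0
    · simpa [h] using hN
    · exact (Polynomial.natDegree_lt_iff_degree_lt h).mpr (hdeg k)
  have heval : ∀ (z : ℂ) (k : Fin N),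
      (p k).eval z = ∑ j : Fin N, z ^ (j : ℕ) * (p k).coeff j := by
    intro z k
    rw [Polynomial.eval_eq_sum_range' (hnat k), ← Fin.sum_univ_eq_sum_range]
    exact Finset.sum_congr rfl fun j _ => mul_comm _ _
  -- the evaluation matrix
  set M : (Fin N → ℂ) → Matrix (Fin N) (Fin N) ℂ :=
    fun x => Matrix.of fun i k => (p k).eval (x i) with hMdef
  have hM : ∀ x, M x = Matrix.vandermonde x * a.transpose := by
    intro x
    ext i k
    simp only [hMdef, ha, Matrix.of_apply, Matrix.mul_apply, Matrix.transpose_apply,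
      Matrix.vandermonde_apply]
    exact heval (x i) k
  have hKmat : ∀ x : Fin N → ℂ,
      (Matrix.of fun i j => K (x i) (x j)) = M x * (M x).conjTranspose := by
    intro x
    ext i j
    simp only [Matrix.of_apply, Matrix.mul_apply, Matrix.conjTranspose_apply, hMdef, hK]
    rfl
  -- invertibility of `a`
  have hXdeg : ∀ j : Fin N, (Polynomial.X ^ (j : ℕ) : Polynomial ℂ).degree < N := by
    intro j
    rw [Polynomial.degree_X_pow]
    exact_mod_cast j.isLt
  choose co hco using fun j : Fin N => hspan (Polynomial.X ^ (j : ℕ)) (hXdeg j)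
  have hCa : (Matrix.of fun j k => co j k) * a = 1 := by
    ext j m
    have := congrArg (fun q : Polynomial ℂ => q.coeff (m : ℕ)) (hco j)
    simp only [Polynomial.coeff_X_pow, Polynomial.finset_sum_coeff,
      Polynomial.coeff_C_mul] at this
    simp only [Matrix.mul_apply, Matrix.of_apply, ha, Matrix.one_apply, ← this]
    rcases eq_or_ne j m with h | h
    · simp [h]
    · have h' : (j : ℕ) ≠ (m : ℕ) := fun hh => h (Fin.val_inj.mp hh)
      simp [h, h', Ne.symm h']
  have hdeta : a.det ≠ 0 := by
    intro h
    have := congrArg Matrix.det hCa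
    rw [Matrix.det_mul, h, mul_zero, Matrix.det_one] at this
    exact zero_ne_one this
  -- the constant
  set c : ℝ := ‖a.det‖ ^ 2 with hc
  have hcpos : 0 < c := by
    have : 0 < ‖a.det‖ := norm_pos_iff.mpr hdeta
    positivity
  -- the determinant identity
  have hdetM : ∀ x : Fin N → ℂ,
      Matrix.det (Matrix.of fun i j => K (x i) (x j))
        = (c : ℂ) * ∏ i : Fin N, ∏ j ∈ Finset.Ioi i,
            ((‖x i - x j‖ : ℝ) : ℂ) ^ 2 := by
    intro x
    have h1 : Matrix.det (Matrix.of fun i j => K (x i) (x j))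
        = ((‖(M x).det‖ ^ 2 : ℝ) : ℂ) := by
      rw [hKmat x, Matrix.det_mul, Matrix.det_conjTranspose, Complex.star_def, Complex.mul_conj, Complex.sq_norm]
    have h2 : ‖(M x).det‖
        = ‖a.det‖ * ∏ i : Fin N, ∏ j ∈ Finset.Ioi i, ‖x i - x j‖ := by
      rw [hM x, Matrix.det_mul, Matrix.det_transpose, norm_mul, Matrix.det_vandermonde,
        norm_prod]
      rw [mul_comm]
      congr 1
      refine Finset.prod_congr rfl fun i _ => ?_
      rw [norm_prod]
      exact Finset.prod_congr rfl fun j _ => (norm_sub_rev _ _)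
    rw [h1, h2]
    push_cast
    rw [mul_pow, ← Finset.prod_pow]
    congr 1
    · rw [hc]; push_cast; ring
    refine Finset.prod_congr rfl fun i _ => ?_
    rw [← Finset.prod_pow]
  refine ⟨⟨c, hcpos, hdetM⟩, ?_⟩
  -- Part 2: integrability
  have hSigma : SigmaFinite μ := inferInstance
  -- each `|p_k|²` is integrable since the orthonormality integral is nonzero
  have hint : ∀ k : Fin N,
      Integrable (fun z : ℂ => (p k).eval z * (starRingEnd ℂ) ((p k).eval z)) μ := by
    intro k
    by_contra h
    have := horth k k
    rw [integral_undef h] at this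
    simp at this
  set S : ℂ → ℝ := fun z => ∑ k : Fin N, ‖(p k).eval z‖ ^ 2 with hSdef
  have hSnn : ∀ z, 0 ≤ S z := fun z => Finset.sum_nonneg fun k _ => by positivity
  have hSint : Integrable S μ := by
    refine integrable_finset_sum _ fun k _ => ?_
    refine ((hint k).re).congr (Filter.Eventually.of_forall fun z => ?_)
    simp only [Complex.mul_conj, RCLike.re_to_complex, Complex.ofReal_re, Complex.sq_norm]
  -- Cauchy-Schwarz pointwise bound for the kernel
  have hKS : ∀ z w : ℂ, ‖K z w‖ ≤ Real.sqrt (S z) * Real.sqrt (S w) := by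
    intro z w
    rw [hK]
    calc ‖∑ k : Fin N, (p k).eval z * (starRingEnd ℂ) ((p k).eval w)‖
        ≤ ∑ k : Fin N, ‖(p k).eval z‖ * ‖(p k).eval w‖ := by
          refine le_trans (norm_sum_le _ _) (le_of_eq ?_)
          refine Finset.sum_congr rfl fun k _ => ?_
          rw [norm_mul, Complex.norm_conj]
      _ ≤ Real.sqrt (∑ k : Fin N, ‖(p k).eval z‖ ^ 2)
            * Real.sqrt (∑ k : Fin N, ‖(p k).eval w‖ ^ 2) :=
          Real.sum_mul_le_sqrt_mul_sqrt _ _ _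
  -- the product bound for each permutation
  have hbound : ∀ (σ : Equiv.Perm (Fin N)) (x : Fin N → ℂ),
      ∏ i : Fin N, ‖K (x (σ i)) (x i)‖ ≤ ∏ i : Fin N, S (x i) := by
    intro σ x
    calc ∏ i : Fin N, ‖K (x (σ i)) (x i)‖
        ≤ ∏ i : Fin N, (Real.sqrt (S (x (σ i))) * Real.sqrt (S (x i))) := by
          refine Finset.prod_le_prod (fun i _ => norm_nonneg _)
            (fun i _ => hKS _ _)
      _ = (∏ i : Fin N, Real.sqrt (S (x (σ i)))) * ∏ i : Fin N, Real.sqrt (S (x i)) :=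
          Finset.prod_mul_distrib
      _ = (∏ i : Fin N, Real.sqrt (S (x i))) * ∏ i : Fin N, Real.sqrt (S (x i)) := by
          rw [Equiv.prod_comp σ (fun i => Real.sqrt (S (x i)))]
      _ = ∏ i : Fin N, S (x i) := by
          rw [← Finset.prod_mul_distrib]
          exact Finset.prod_congr rfl fun i _ => Real.mul_self_sqrt (hSnn _)
  -- the dominating function is integrable
  have hgint : Integrable (fun x : Fin N → ℂ => ∏ i : Fin N, S (x i))
      (Measure.pi fun _ : Fin N => μ) :=
    aux_integrable_pi_prod μ _ fun _ => hSint
  -- continuity of the kernel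
  have hKcont : Continuous (fun zw : ℂ × ℂ => K zw.1 zw.2) := by
    simp only [hK]
    exact continuous_finset_sum _ fun k _ =>
      ((p k).continuous.comp continuous_fst).mul
        (Complex.continuous_conj.comp ((p k).continuous.comp continuous_snd))
  -- integrability of the determinant
  have hdetint : Integrable
      (fun x : Fin N → ℂ => Matrix.det (Matrix.of fun i j => K (x i) (x j)))
      (Measure.pi fun _ : Fin N => μ) := by
    simp only [Matrix.det_apply]
    refine integrable_finset_sum _ fun σ _ => ?_
    have hcont : Continuous (fun x : Fin N → ℂ => ∏ i : Fin N, K (x (σ i)) (x i)) := by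
      refine continuous_finset_prod _ fun i _ => ?_
      have h1 : Continuous fun x : Fin N → ℂ => ((x (σ i), x i) : ℂ × ℂ) :=
        Continuous.prodMk (continuous_apply _) (continuous_apply _)
      exact hKcont.comp h1
    have hterm : Integrable (fun x : Fin N → ℂ => ∏ i : Fin N, K (x (σ i)) (x i))
        (Measure.pi fun _ : Fin N => μ) := by
      refine Integrable.mono' hgint hcont.aestronglyMeasurable
        (Filter.Eventually.of_forall fun x => ?_)
      rw [norm_prod]
      exact hbound σ x
    have : (fun x : Fin N → ℂ =>
        Equiv.Perm.sign σ • ∏ i : Fin N, (Matrix.of fun i j => K (x i) (x j)) (σ i) i)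
        = fun x : Fin N → ℂ =>
          ((Equiv.Perm.sign σ : ℤ) : ℂ) * ∏ i : Fin N, K (x (σ i)) (x i) := by
      funext x
      simp [Matrix.of_apply, Units.smul_def, zsmul_eq_mul]
    rw [this]
    exact hterm.const_mul _
  -- conclude: the Vandermonde density is `c⁻¹` times the real part of the determinant
  have hfun : (fun x : Fin N → ℂ =>
      ∏ i : Fin N, ∏ j ∈ Finset.Ioi i, (‖x i - x j‖) ^ 2)
      = fun x : Fin N → ℂ =>
        c⁻¹ * (Matrix.det (Matrix.of fun i j => K (x i) (x j))).re := by
    funext x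
    have h := hdetM x
    have h2 : Matrix.det (Matrix.of fun i j => K (x i) (x j))
        = ((c * ∏ i : Fin N, ∏ j ∈ Finset.Ioi i, (‖x i - x j‖) ^ 2 : ℝ) : ℂ) := by
      rw [h]; push_cast; ring
    rw [h2, Complex.ofReal_re, ← mul_assoc, inv_mul_cancel₀ (ne_of_gt hcpos), one_mul]
  rw [hfun]
  exact (hdetint.re).const_mul _
end
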